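/- Let p, q ≥ 1 be coprime integers, let r ≥ 1 be an integer, and let β < 0 be real. Set α = −q/p and β′ = rβ/((1−r)pβ + 1) (note that (1−r)pβ + 1 > 0 since β < 0 and r ≥ 1). If ⌊α⌊βx⌋⌋ ≥ ⌊β⌊αx⌋⌋ holds for all real x, then ⌊α⌊β′x⌋⌋ ≥ ⌊β′⌊αx⌋⌋ holds for all real x. -/
import Mathlib

/-- If integers `m n c` satisfy `β(m+1) < αn < c ≤ βm` with `α, β < 0`, then the
nonnegative commutator relation for `(α, β)` fails at some point. -/
lemma exists_violation (α β : ℝ) (hα : α < 0) (hβ : β < 0) (m n c : ℤ)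
    (h1 : β * ((m : ℝ) + 1) < α * n) (h2 : α * n < c) (h3 : (c : ℝ) ≤ β * m) :
    ∃ x : ℝ, ⌊α * (⌊β * x⌋ : ℝ)⌋ < ⌊β * (⌊α * x⌋ : ℝ)⌋ := by
  have hα' : α ≠ 0 := ne_of_lt hα
  have hβ' : β ≠ 0 := ne_of_lt hβ
  have hnm : α * n < β * m := lt_of_lt_of_le h2 h3
  refine ⟨min ((m : ℝ) / α) ((n : ℝ) / β), ?_⟩
  have hm : ⌊α * min ((m : ℝ) / α) ((n : ℝ) / β)⌋ = m := by
    rcases le_total ((m : ℝ) / α) ((n : ℝ) / β) with hle | hle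
    · rw [min_eq_left hle, mul_div_cancel₀ _ hα']
      exact Int.floor_intCast m
    · rw [min_eq_right hle]
      rw [Int.floor_eq_iff]
      constructor
      · -- m ≤ α * (n/β) : from n/β ≤ m/α
        have := mul_le_mul_of_nonpos_left hle hα.le
        rw [mul_div_cancel₀ _ hα'] at this
        linarith
      · -- α * (n/β) < m + 1 : from β(m+1) < αn
        have : α * n / β < (m : ℝ) + 1 := by
          rw [div_lt_iff_of_neg hβ]
          linarith
        calc α * ((n : ℝ) / β) = α * n / β := by ring
          _ < (m : ℝ) + 1 := this
  have hn : ⌊β * min ((m : ℝ) / α) ((n : ℝ) / β)⌋ = n := by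
    rcases le_total ((m : ℝ) / α) ((n : ℝ) / β) with hle | hle
    · rw [min_eq_left hle]
      rw [Int.floor_eq_iff]
      constructor
      · have := mul_le_mul_of_nonpos_left hle hβ.le
        rw [mul_div_cancel₀ _ hβ'] at this
        linarith
      · have : β * m / α < (n : ℝ) + 1 := by
          rw [div_lt_iff_of_neg hα]
          nlinarith
        calc β * ((m : ℝ) / α) = β * m / α := by ring
          _ < (n : ℝ) + 1 := this
    · rw [min_eq_right hle, mul_div_cancel₀ _ hβ']
      exact Int.floor_intCast n
  rw [hm, hn]
  have e1 : ⌊α * (n : ℝ)⌋ < c := Int.floor_lt.2 h2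
  have e2 : c ≤ ⌊β * (m : ℝ)⌋ := Int.le_floor.2 h3
  omega

theorem linear_fractional_symmetry (p q r : ℤ) (hp : 1 ≤ p) (hq : 1 ≤ q)
    (hpq : IsCoprime p q) (hr : 1 ≤ r) (β : ℝ) (hβ : β < 0)
    (h : ∀ x : ℝ, ⌊(-(q : ℝ) / (p : ℝ)) * (⌊β * x⌋ : ℝ)⌋ ≥
          ⌊β * (⌊(-(q : ℝ) / (p : ℝ)) * x⌋ : ℝ)⌋) :
    ∀ x : ℝ,
      ⌊(-(q : ℝ) / (p : ℝ)) *
          (⌊((r : ℝ) * β / ((1 - (r : ℝ)) * (p : ℝ) * β + 1)) * x⌋ : ℝ)⌋ ≥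
      ⌊((r : ℝ) * β / ((1 - (r : ℝ)) * (p : ℝ) * β + 1)) *
          (⌊(-(q : ℝ) / (p : ℝ)) * x⌋ : ℝ)⌋ := by
  intro x
  by_contra hcon
  push_neg at hcon
  set α : ℝ := -(q : ℝ) / (p : ℝ) with hαdef
  set D : ℝ := (1 - (r : ℝ)) * (p : ℝ) * β + 1 with hDdef
  set β' : ℝ := (r : ℝ) * β / D with hβ'def
  have hp0 : (0 : ℝ) < (p : ℝ) := by exact_mod_cast hp.trans_lt' zero_lt_one
  have hq0 : (0 : ℝ) < (q : ℝ) := by exact_mod_cast hq.trans_lt' zero_lt_one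
  have hr1 : (1 : ℝ) ≤ (r : ℝ) := by exact_mod_cast hr
  have hα : α < 0 := div_neg_of_neg_of_pos (by linarith) hp0
  have hD : (0 : ℝ) < D := by
    have h0 : (0 : ℝ) ≤ ((r : ℝ) - 1) * (p : ℝ) * (-β) :=
      mul_nonneg (mul_nonneg (by linarith) hp0.le) (by linarith)
    have he : (1 - (r : ℝ)) * (p : ℝ) * β = ((r : ℝ) - 1) * (p : ℝ) * (-β) := by ring
    rw [hDdef, he]
    linarith
  have hβ'neg : β' < 0 := div_neg_of_neg_of_pos (by nlinarith) hD
  set m : ℤ := ⌊α * x⌋ with hmdef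
  set n : ℤ := ⌊β' * x⌋ with hndef
  set c : ℤ := ⌊β' * (m : ℝ)⌋ with hcdef
  -- failure witness for β'
  have hc1 : α * n < c := Int.floor_lt.1 hcon
  have hc2 : (c : ℝ) ≤ β' * m := Int.floor_le _
  have hc3 : β' * ((m : ℝ) + 1) < α * n := by
    have f1 : α * x < (m : ℝ) + 1 := Int.lt_floor_add_one _
    have f3 : (n : ℝ) ≤ β' * x := Int.floor_le _
    nlinarith [mul_lt_mul_of_neg_left f1 hβ'neg, mul_le_mul_of_nonpos_left f3 hα.le]
  -- integrality bookkeeping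
  set K : ℤ := -n * q with hKdef
  have hK : α * n = (K : ℝ) / p := by
    rw [hαdef, hKdef]
    push_cast
    ring
  have hKc : K + 1 ≤ p * c := by
    have : (K : ℝ) < p * c := by
      have := hc1
      rw [hK, div_lt_iff₀ hp0] at this
      nlinarith
    have : K < p * c := by exact_mod_cast this
    omega
  set m₂ : ℤ := r * m + r - 1 + (r - 1) * K with hm2def
  set m₁ : ℤ := r * m + (r - 1) * p * c with hm1def
  have hm21 : m₂ ≤ m₁ := by
    have h1 : (0 : ℤ) ≤ r - 1 := by omega
    have h2 : (0 : ℤ) ≤ p * c - 1 - K := by omega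
    nlinarith [mul_nonneg h1 h2]
  -- transfer: c ≤ β * m₁
  have hA : (c : ℝ) ≤ β * m₁ := by
    have : (c : ℝ) * D ≤ (r : ℝ) * β * m := by
      rw [hβ'def, div_mul_eq_mul_div] at hc2
      exact (le_div_iff₀ hD).1 hc2
    rw [hDdef] at this
    have : (c : ℝ) ≤ (r : ℝ) * β * m + ((r : ℝ) - 1) * p * β * c := by nlinarith
    rw [hm1def]
    push_cast
    nlinarith
  -- transfer: β * (m₂ + 1) < K / p
  have hB : β * ((m₂ : ℝ) + 1) < (K : ℝ) / p := by
    have step : (r : ℝ) * β * ((m : ℝ) + 1) * p < (K : ℝ) * D := by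
      have := hc3
      rw [hβ'def, hK, div_mul_eq_mul_div, div_lt_div_iff₀ hD hp0] at this
      linarith
    rw [hDdef] at step
    rw [lt_div_iff₀ hp0]
    rw [hm2def]
    push_cast
    nlinarith
  have hA2 : (c : ℝ) ≤ β * m₂ := by
    have hcast : (m₂ : ℝ) ≤ (m₁ : ℝ) := by exact_mod_cast hm21
    nlinarith [mul_le_mul_of_nonpos_left hcast hβ.le]
  obtain ⟨x₀, hx₀⟩ := exists_violation α β hα hβ m₂ n c (by rw [← hK] at hB; exact hB) hc1 hA2
  exact absurd (h x₀) (not_le.2 hx₀)
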